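/- arXiv:1203.5800 — 3 statements merged into one kernel-verified Lean document; each statement's English description precedes it below -/
import Mathlib

section
/- Let g ∈ M_n(R) with R = 𝔽_p[x,x⁻¹]. The submodule g·R^n is a maximal R-submodule of R^n if and only if det(g) is nonzero and irreducible in R. -/
open Matrix LaurentPolynomial

section Aux

variable {R : Type*} [CommRing R] {n m : ℕ}

/-- If the range of `g` is contained in the range of `h`, then `g` factors as `h * c`. -/
lemma aux_factor (g : Matrix (Fin n) (Fin n) R) (h : Matrix (Fin n) (Fin m) R)
    (hle : LinearMap.range g.mulVecLin ≤ LinearMap.range h.mulVecLin) :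
    ∃ c : Matrix (Fin m) (Fin n) R, g = h * c := by
  have hcol : ∀ j, ∃ y, h.mulVecLin y = g.mulVecLin (Pi.single j 1) := fun j =>
    hle ⟨Pi.single j 1, rfl⟩
  choose y hy using hcol
  refine ⟨Matrix.of fun k j => y j k, ?_⟩
  ext i j
  have hj := congrFun (hy j) i
  simp only [Matrix.mulVecLin_apply, Matrix.mulVec_single_one, Matrix.col, Matrix.transpose_apply] at hj
  rw [Matrix.mul_apply, ← hj]
  simp [Matrix.mulVec, dotProduct]

lemma aux_det_zero [IsDomain R] (hm : m < n) (h : Matrix (Fin n) (Fin m) R)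
    (c : Matrix (Fin m) (Fin n) R) : (h * c).det = 0 := by
  rw [← Matrix.exists_mulVec_eq_zero_iff]
  have hinj : ¬ Function.Injective c.mulVecLin := by
    intro hinj
    have h1 := LinearMap.rank_le_of_injective _ hinj
    rw [rank_fin_fun, rank_fin_fun] at h1
    exact absurd (Nat.cast_le.mp h1) (by omega)
  rw [← LinearMap.ker_eq_bot] at hinj
  obtain ⟨v, hv, hv0⟩ := (Submodule.ne_bot_iff _).mp hinj
  refine ⟨v, hv0, ?_⟩
  have hcv : c.mulVec v = 0 := hv
  rw [← Matrix.mulVec_mulVec, hcv, Matrix.mulVec_zero]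

lemma aux_assoc [IsDomain R] (g h : Matrix (Fin n) (Fin n) R) (hg : g.det ≠ 0)
    (hr : LinearMap.range g.mulVecLin = LinearMap.range h.mulVecLin) :
    Associated h.det g.det := by
  obtain ⟨c, hc⟩ := aux_factor g h hr.le
  obtain ⟨c', hc'⟩ := aux_factor h g hr.ge
  have h1 : g.det = h.det * c.det := by rw [hc, Matrix.det_mul]
  have h2 : h.det = g.det * c'.det := by rw [hc', Matrix.det_mul]
  have h3 : g.det * 1 = g.det * (c'.det * c.det) := by
    calc g.det * 1 = g.det := mul_one _
    _ = h.det * c.det := h1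
    _ = (g.det * c'.det) * c.det := by rw [← h2]
    _ = g.det * (c'.det * c.det) := by ring
  have h4 := (mul_left_cancel₀ hg h3).symm
  exact ⟨(IsUnit.of_mul_eq_one c'.det (by rw [mul_comm]; exact h4)).unit, by
    rw [IsUnit.unit_spec]; exact h1.symm⟩

/-- The main technical result, for any PID possessing a nonzero nonunit. -/
lemma aux_coatom_iff {R : Type*} [CommRing R] [IsDomain R] [IsPrincipalIdealRing R]
    {a : R} (ha0 : a ≠ 0) (hau : ¬ IsUnit a) {n : ℕ} (g : Matrix (Fin n) (Fin n) R) :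
    IsCoatom (LinearMap.range g.mulVecLin) ↔ Irreducible g.det := by
  set N := LinearMap.range g.mulVecLin with hNdef
  constructor
  · intro hco
    -- first, `det g ≠ 0`
    have hdet : g.det ≠ 0 := by
      intro hdet0
      obtain ⟨v, hv_ne, hvg⟩ := (Matrix.exists_vecMul_eq_zero_iff).mpr hdet0
      obtain ⟨i₀, hvi₀⟩ := Function.ne_iff.mp hv_ne
      simp only [Pi.zero_apply] at hvi₀
      set φ : (Fin n → R) →ₗ[R] R :=
        { toFun := fun w => v ⬝ᵥ w
          map_add' := fun x y => by simp [dotProduct, mul_add, Finset.sum_add_distrib]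
          map_smul' := fun r x => by
            simp [dotProduct, Finset.mul_sum, mul_left_comm] } with hφ
      have hφ_apply : ∀ w, φ w = v ⬝ᵥ w := fun _ => rfl
      have hNle : N ≤ LinearMap.ker φ := by
        rintro x ⟨u, rfl⟩
        rw [LinearMap.mem_ker, hφ_apply, Matrix.mulVecLin_apply, Matrix.dotProduct_mulVec,
          hvg, zero_dotProduct]
      have hsingle : φ (Pi.single i₀ 1) = v i₀ := by
        rw [hφ_apply, dotProduct_single, mul_one]
      have hker_ne : LinearMap.ker φ ≠ ⊤ := by
        intro htop
        have : φ (Pi.single i₀ 1) = 0 := by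
          rw [← LinearMap.mem_ker, htop]; trivial
        rw [hsingle] at this
        exact hvi₀ this
      have hNk : N = LinearMap.ker φ := by
        rcases eq_or_lt_of_le hNle with h | h
        · exact h
        · exact absurd (hco.2 _ h) hker_ne
      set I : Ideal R := Ideal.span {a * v i₀} with hI
      set W' : Submodule R (Fin n → R) := Submodule.comap φ (I : Submodule R R) with hW'
      have hlt : N < W' := by
        rw [hNk]
        refine SetLike.lt_iff_le_and_exists.mpr ⟨fun x hx => ?_, a • (Pi.single i₀ 1 : Fin n → R), ?_, ?_⟩
        · have : φ x = 0 := hx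
          simp only [hW', Submodule.mem_comap, this]
          exact Submodule.zero_mem _
        · simp only [hW', Submodule.mem_comap, LinearMap.map_smul, hsingle, smul_eq_mul]
          exact Ideal.subset_span rfl
        · rw [LinearMap.mem_ker, LinearMap.map_smul, hsingle, smul_eq_mul]
          exact mul_ne_zero ha0 hvi₀
      have htop := hco.2 _ hlt
      have hmem : Pi.single i₀ 1 ∈ W' := by rw [htop]; trivial
      rw [hW', Submodule.mem_comap, hsingle] at hmem
      obtain ⟨t, ht⟩ := Ideal.mem_span_singleton.mp hmem
      have hcan : v i₀ * 1 = v i₀ * (a * t) := by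
        calc v i₀ * 1 = v i₀ := mul_one _
        _ = a * v i₀ * t := ht
        _ = v i₀ * (a * t) := by ring
      exact hau (IsUnit.of_mul_eq_one t (mul_left_cancel₀ hvi₀ hcan).symm)
    -- now irreducibility
    obtain ⟨w, hw⟩ : ∃ w, w ∉ N := by
      by_contra hcon; push_neg at hcon
      exact hco.1 (Submodule.eq_top_iff'.mpr hcon)
    set I : Ideal R := Submodule.comap (LinearMap.toSpanSingleton R (Fin n → R) w) N with hI
    have hmemI : ∀ r : R, r ∈ I ↔ r • w ∈ N := fun r => Iff.rfl
    have hdetI : g.det ∈ I := by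
      rw [hmemI]
      refine ⟨(g.adjugate) *ᵥ w, ?_⟩
      rw [Matrix.mulVecLin_apply, Matrix.mulVec_mulVec, Matrix.mul_adjugate,
        Matrix.smul_mulVec, Matrix.one_mulVec]
    have hImax : I.IsMaximal := by
      rw [Ideal.isMaximal_iff]
      constructor
      · intro h1
        exact hw (by simpa using (hmemI 1).mp h1)
      · intro J x hIJ hxI hxJ
        have hxwN : x • w ∉ N := fun hc => hxI ((hmemI x).mpr hc)
        have hlt : N < N ⊔ Submodule.span R {x • w} :=
          SetLike.lt_iff_le_and_exists.mpr ⟨le_sup_left, x • w,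
            Submodule.mem_sup_right (Submodule.mem_span_singleton_self _), hxwN⟩
        have htop := hco.2 _ hlt
        have hwmem : w ∈ N ⊔ Submodule.span R {x • w} := by rw [htop]; trivial
        obtain ⟨ν, hν, z, hz, hsum⟩ := Submodule.mem_sup.mp hwmem
        obtain ⟨r, rfl⟩ := Submodule.mem_span_singleton.mp hz
        have hνN : (1 - r * x) • w ∈ N := by
          have heq : (1 - r * x) • w = ν := by
            have hν' : ν = w - r • (x • w) := eq_sub_of_add_eq hsum
            rw [hν', sub_smul, one_smul, mul_smul]
          rw [heq]; exact hν
        have h1 : (1 - r * x) ∈ J := hIJ ((hmemI _).mpr hνN)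
        have h2 : r * x ∈ J := J.mul_mem_left r hxJ
        have := J.add_mem h1 h2
        simpa using this
    obtain ⟨π, hπ⟩ := (IsPrincipalIdealRing.principal I).principal
    rw [Ideal.submodule_span_eq] at hπ
    have hπ0 : π ≠ 0 := by
      rintro rfl
      rw [hπ, Ideal.span_singleton_eq_bot.mpr rfl] at hdetI
      exact hdet (by simpa using hdetI)
    have hπprime : Prime π := (Ideal.span_singleton_prime hπ0).mp (hπ ▸ hImax.isPrime)
    have hsupw : N ⊔ Submodule.span R {w} = ⊤ := by
      refine hco.2 _ (SetLike.lt_iff_le_and_exists.mpr ⟨le_sup_left, w,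
        Submodule.mem_sup_right (Submodule.mem_span_singleton_self _), hw⟩)
    have hdec : ∀ i : Fin n, ∃ ν ∈ N, ∃ c : R, Pi.single i 1 = ν + c • w := by
      intro i
      have : (Pi.single i 1 : Fin n → R) ∈ N ⊔ Submodule.span R {w} := by
        rw [hsupw]; trivial
      obtain ⟨ν, hν, z, hz, hsum⟩ := Submodule.mem_sup.mp this
      obtain ⟨c, rfl⟩ := Submodule.mem_span_singleton.mp hz
      exact ⟨ν, hν, c, hsum.symm⟩
    choose ν hν c hc using hdec
    have key : ∀ u : Fin n → R, u ∈ N ↔ (∑ i, c i * u i) ∈ I := by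
      intro u
      have hu : u = (∑ i, u i • ν i) + (∑ i, c i * u i) • w := by
        calc u = ∑ i, Pi.single i (u i) := (Finset.univ_sum_single u).symm
        _ = ∑ i, u i • (Pi.single i 1 : Fin n → R) := by
            refine Finset.sum_congr rfl fun i _ => ?_
            rw [← Pi.single_smul, smul_eq_mul, mul_one]
        _ = ∑ i, (u i • ν i + (c i * u i) • w) := by
            refine Finset.sum_congr rfl fun i _ => ?_
            rw [hc i, smul_add, smul_smul, mul_comm]
        _ = (∑ i, u i • ν i) + (∑ i, (c i * u i) • w) := Finset.sum_add_distrib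
        _ = (∑ i, u i • ν i) + (∑ i, c i * u i) • w := by
            rw [Finset.sum_smul]
      constructor
      · intro huN
        have hsub : (∑ i, c i * u i) • w = u - ∑ i, u i • ν i :=
          eq_sub_of_add_eq' hu.symm
        rw [hmemI, hsub]
        exact N.sub_mem huN (Submodule.sum_mem _ fun i _ => N.smul_mem _ (hν i))
      · intro hsI
        rw [hu]
        exact N.add_mem (Submodule.sum_mem _ fun i _ => N.smul_mem _ (hν i)) ((hmemI _).mp hsI)
    obtain ⟨i₀, hci₀⟩ : ∃ i, c i ∉ I := by
      by_contra hcon; push_neg at hcon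
      refine hco.1 (Submodule.eq_top_iff'.mpr fun u => ?_)
      rw [key]
      exact Ideal.sum_mem I fun i _ => I.mul_mem_right (u i) (hcon i)
    have hsup2 : I ⊔ Ideal.span {c i₀} = ⊤ := by
      refine hImax.out.2 _ (SetLike.lt_iff_le_and_exists.mpr ⟨le_sup_left, c i₀,
        Submodule.mem_sup_right (Submodule.mem_span_singleton_self _), hci₀⟩)
    have h1mem : (1 : R) ∈ I ⊔ Ideal.span {c i₀} := by rw [hsup2]; trivial
    obtain ⟨y, hy, zz, hzz, hyz⟩ := Submodule.mem_sup.mp h1mem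
    rw [hπ] at hy
    obtain ⟨z, hzy⟩ := Ideal.mem_span_singleton'.mp hy
    obtain ⟨u, huz⟩ := Ideal.mem_span_singleton'.mp hzz
    have hbez : u * c i₀ = 1 - z * π := by
      rw [huz, ← hyz, ← hzy]; ring
    -- the matrix `h` with the same range as `g` and determinant `π`
    set q : Fin n → R := fun j => if j = i₀ then π - 1 else -(u * c j) with hq
    set h : Matrix (Fin n) (Fin n) R :=
      Matrix.of fun i j => (if i = j then (1 : R) else 0) + (if i = i₀ then q j else 0) with hh
    have hentry : ∀ i j, h i j = (if i = j then (1 : R) else 0) + (if i = i₀ then q j else 0) :=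
      fun _ _ => rfl
    have hdeth : h.det = π := by
      have heq : h = 1 + Matrix.replicateCol Unit (Pi.single i₀ 1 : Fin n → R) * Matrix.replicateRow Unit q := by
        ext i j
        rw [hentry]
        simp only [Matrix.add_apply, Matrix.one_apply, Matrix.mul_apply, Matrix.replicateCol_apply,
          Matrix.replicateRow_apply, Finset.univ_unique, Finset.sum_singleton, Pi.single_apply]
        by_cases hi : i = i₀ <;> simp [hi]
      rw [heq, Matrix.det_one_add_replicateCol_mul_replicateRow, dotProduct_single, hq]
      simp
    have hcolsum : ∀ j, (∑ i, c i * h i j) ∈ I := by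
      intro j
      have hsplit : ∑ i, c i * h i j
          = (∑ i, c i * (if i = j then (1 : R) else 0)) + (∑ i, c i * (if i = i₀ then q j else 0)) := by
        rw [← Finset.sum_add_distrib]
        refine Finset.sum_congr rfl fun i _ => ?_
        rw [hentry, mul_add]
      have hs1 : (∑ i, c i * (if i = j then (1 : R) else 0)) = c j := by
        simp [mul_ite]
      have hs2 : (∑ i, c i * (if i = i₀ then q j else 0)) = c i₀ * q j := by
        simp [mul_ite]
      rw [hsplit, hs1, hs2, hπ]
      by_cases hj : j = i₀
      · subst hj
        have hqj : q j = π - 1 := by simp [hq]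
        rw [hqj]
        exact Ideal.mem_span_singleton.mpr ⟨c j, by ring⟩
      · have hqj : q j = -(u * c j) := by simp [hq, hj]
        rw [hqj]
        refine Ideal.mem_span_singleton.mpr ⟨z * c j, ?_⟩
        have hcu : c i₀ * (u * c j) = (1 - z * π) * c j := by
          rw [← hbez]; ring
        calc c j + c i₀ * -(u * c j) = c j - c i₀ * (u * c j) := by ring
        _ = c j - (1 - z * π) * c j := by rw [hcu]
        _ = π * (z * c j) := by ring
    have hrangehN : LinearMap.range h.mulVecLin ≤ N := by
      rintro x ⟨y, rfl⟩
      rw [key]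
      have hrw : ∑ i, c i * (h.mulVecLin y) i = ∑ j, (∑ i, c i * h i j) * y j := by
        simp only [Matrix.mulVecLin_apply, Matrix.mulVec, dotProduct]
        simp only [Finset.mul_sum]
        rw [Finset.sum_comm]
        refine Finset.sum_congr rfl fun j _ => ?_
        rw [Finset.sum_mul]
        refine Finset.sum_congr rfl fun i _ => ?_
        ring
      rw [hrw]
      exact Ideal.sum_mem I fun j _ => I.mul_mem_right (y j) (hcolsum j)
    have hNrangeh : N ≤ LinearMap.range h.mulVecLin := by
      intro x hx
      have hsI : (∑ i, c i * x i) ∈ I := (key x).mp hx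
      set S' : R := ∑ j ∈ Finset.univ.erase i₀, c j * x j with hS'
      have hS : ∑ i, c i * x i = c i₀ * x i₀ + S' :=
        (Finset.add_sum_erase _ _ (Finset.mem_univ i₀)).symm
      set t : R := x i₀ + u * S' with ht
      have hπdvdS : π ∣ ∑ i, c i * x i := by
        rw [hπ] at hsI
        exact Ideal.mem_span_singleton.mp hsI
      have hct : π ∣ c i₀ * t := by
        have hval : c i₀ * t = (∑ i, c i * x i) - z * π * S' := by
          rw [ht, hS]
          have : c i₀ * u = 1 - z * π := by rw [← hbez]; ring
          calc c i₀ * (x i₀ + u * S') = c i₀ * x i₀ + (c i₀ * u) * S' := by ring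
          _ = c i₀ * x i₀ + (1 - z * π) * S' := by rw [this]
          _ = c i₀ * x i₀ + S' - z * π * S' := by ring
        rw [hval]
        exact dvd_sub hπdvdS ⟨z * S', by ring⟩
      have hπnotci₀ : ¬ π ∣ c i₀ := fun hd => hci₀ (by rw [hπ]; exact Ideal.mem_span_singleton.mpr hd)
      have hπt : π ∣ t := ((hπprime.2.2 _ _ hct).resolve_left hπnotci₀)
      obtain ⟨s, hs⟩ := hπt
      refine ⟨Function.update x i₀ s, ?_⟩
      ext i
      rw [Matrix.mulVecLin_apply]
      show (∑ j, h i j * Function.update x i₀ s j) = x i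
      rw [← Finset.add_sum_erase _ _ (Finset.mem_univ i₀), Function.update_self]
      have herase : ∀ j ∈ Finset.univ.erase i₀,
          h i j * Function.update x i₀ s j = h i j * x j := by
        intro j hj
        rw [Function.update_of_ne (Finset.mem_erase.mp hj).1]
      rw [Finset.sum_congr rfl herase]
      by_cases hi : i = i₀
      · subst hi
        have hii : h i i = π := by
          rw [hentry]
          have hqi : q i = π - 1 := by simp [hq]
          simp [hqi]
        have hterm : ∀ j ∈ Finset.univ.erase i, h i j * x j = -(u * (c j * x j)) := by
          intro j hj
          have hji : j ≠ i := (Finset.mem_erase.mp hj).1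
          have hij : i ≠ j := fun hcon => hji hcon.symm
          have hqj : q j = -(u * c j) := by simp [hq, hji]
          rw [hentry, hqj]
          simp only [if_neg hij, eq_self_iff_true, if_true, zero_add]
          ring
        rw [Finset.sum_congr rfl hterm, hii]
        have hsum' : ∑ j ∈ Finset.univ.erase i, -(u * (c j * x j)) = -(u * S') := by
          rw [hS', Finset.mul_sum, ← Finset.sum_neg_distrib]
        rw [hsum', ← hs, ht]
        ring
      · have hii0 : h i i₀ = 0 := by
          rw [hentry]
          simp [hi, fun hcon : i = i₀ => hi hcon]
        have hterm : ∀ j ∈ Finset.univ.erase i₀, h i j * x j = (if i = j then (1:R) else 0) * x j := by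
          intro j hj
          rw [hentry]
          simp only [if_neg hi, add_zero]
        rw [Finset.sum_congr rfl hterm, hii0, zero_mul, zero_add]
        have : ∑ j ∈ Finset.univ.erase i₀, (if i = j then (1:R) else 0) * x j = x i := by
          simp only [ite_mul, one_mul, zero_mul, Finset.sum_ite_eq]
          simp [Finset.mem_erase, hi]
        rw [this]
    have hr : LinearMap.range g.mulVecLin = LinearMap.range h.mulVecLin :=
      le_antisymm hNrangeh hrangehN
    have hassoc := aux_assoc g h hdet hr
    rw [hdeth] at hassoc
    exact hassoc.irreducible hπprime.irreducible
  · intro hirr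
    have hdet : g.det ≠ 0 := fun h0 => not_irreducible_zero (h0 ▸ hirr)
    constructor
    · intro htop
      obtain ⟨c, hc⟩ := aux_factor 1 g (by rw [← hNdef, htop]; exact le_top)
      have h1 : g.det * c.det = 1 := by
        rw [← Matrix.det_mul, ← hc, Matrix.det_one]
      exact hirr.not_isUnit (IsUnit.of_mul_eq_one _ h1)
    · intro W hW
      obtain ⟨m, snf⟩ := Submodule.smithNormalForm (Pi.basisFun R (Fin n)) W
      have hmn : m ≤ n := by
        simpa using Fintype.card_le_of_injective snf.f snf.f.injective
      set h : Matrix (Fin n) (Fin m) R := Matrix.of fun i j => (snf.bN j : Fin n → R) i with hhdef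
      have hrangeh : LinearMap.range h.mulVecLin = W := by
        rw [Matrix.range_mulVecLin]
        have h1 : Set.range h.col = W.subtype '' Set.range snf.bN := by
          rw [← Set.range_comp]
          rfl
        rw [h1, Submodule.span_image, snf.bN.span_eq, Submodule.map_top,
          Submodule.range_subtype]
      have hle : LinearMap.range g.mulVecLin ≤ LinearMap.range h.mulVecLin := by
        rw [hrangeh]; exact hW.le
      obtain ⟨c, hc⟩ := aux_factor g h hle
      rcases lt_or_eq_of_le hmn with hlt | heq
      · exact absurd (hc ▸ aux_det_zero hlt h c) hdet
      · subst heq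
        have hdetmul : g.det = h.det * c.det := by rw [hc, Matrix.det_mul]
        rcases hirr.isUnit_or_isUnit hdetmul with hu | hu
        · have hsurj : Function.Surjective h.mulVecLin := by
            have := Matrix.mulVec_surjective_iff_isUnit.mpr ((Matrix.isUnit_iff_isUnit_det h).mpr hu)
            exact this
          rw [← hrangeh, LinearMap.range_eq_top]
          exact hsurj
        · exfalso
          have hsurj : Function.Surjective c.mulVecLin := by
            have := Matrix.mulVec_surjective_iff_isUnit.mpr ((Matrix.isUnit_iff_isUnit_det c).mpr hu)
            exact this
          have hreq : LinearMap.range g.mulVecLin = LinearMap.range h.mulVecLin := by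
            rw [hc, Matrix.mulVecLin_mul]
            exact LinearMap.range_comp_of_range_eq_top _ (LinearMap.range_eq_top.mpr hsurj)
          exact hW.ne (hreq.trans hrangeh)

end Aux

noncomputable instance laurentIsDomain (p : ℕ) [Fact p.Prime] :
    IsDomain (LaurentPolynomial (ZMod p)) :=
  NoZeroDivisors.to_isDomain _

instance laurentIsPID (p : ℕ) [Fact p.Prime] :
    IsPrincipalIdealRing (LaurentPolynomial (ZMod p)) := by
  constructor
  intro J
  haveI hl : IsLocalization (Submonoid.powers (Polynomial.X : Polynomial (ZMod p)))
      (LaurentPolynomial (ZMod p)) := LaurentPolynomial.isLocalization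
  have hmc := IsLocalization.map_comap (Submonoid.powers (Polynomial.X : Polynomial (ZMod p)))
    (LaurentPolynomial (ZMod p)) J
  obtain ⟨a, ha⟩ := (IsPrincipalIdealRing.principal
    (Ideal.comap (algebraMap (Polynomial (ZMod p)) (LaurentPolynomial (ZMod p))) J)).principal
  refine ⟨⟨algebraMap _ _ a, ?_⟩⟩
  rw [← hmc, Ideal.under_def, ha]
  simp [Ideal.map_span, Ideal.submodule_span_eq]

/-- The evaluation-at-1 ring hom out of the Laurent polynomial ring. -/
noncomputable def laurentEvalOne (p : ℕ) [Fact p.Prime] :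
    LaurentPolynomial (ZMod p) →+* ZMod p := by
  haveI hl : IsLocalization (Submonoid.powers (Polynomial.X : Polynomial (ZMod p)))
      (LaurentPolynomial (ZMod p)) := LaurentPolynomial.isLocalization
  exact IsLocalization.lift (M := Submonoid.powers (Polynomial.X : Polynomial (ZMod p)))
    (g := Polynomial.evalRingHom (1 : ZMod p))
    (fun y => by
      obtain ⟨k, hk⟩ := y.2
      rw [← hk]
      simp)

lemma laurentEvalOne_T (p : ℕ) [Fact p.Prime] :
    laurentEvalOne p (T 1) = 1 := by
  haveI hl : IsLocalization (Submonoid.powers (Polynomial.X : Polynomial (ZMod p)))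
      (LaurentPolynomial (ZMod p)) := LaurentPolynomial.isLocalization
  have h1 : (T 1 : LaurentPolynomial (ZMod p)) =
      algebraMap (Polynomial (ZMod p)) (LaurentPolynomial (ZMod p)) Polynomial.X := by
    simp [LaurentPolynomial.algebraMap_eq_toLaurent]
  rw [laurentEvalOne, h1, IsLocalization.lift_eq]
  simp

lemma laurent_exists_nonunit (p : ℕ) [Fact p.Prime] :
    (T 1 - 1 : LaurentPolynomial (ZMod p)) ≠ 0 ∧
      ¬ IsUnit (T 1 - 1 : LaurentPolynomial (ZMod p)) := by
  constructor
  · intro h0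
    have h1 : (T 1 - 1 : LaurentPolynomial (ZMod p)) =
        Polynomial.toLaurent (Polynomial.X - 1) := by
      simp
    rw [h1] at h0
    have h2 : (Polynomial.X - 1 : Polynomial (ZMod p)) = 0 := by
      have := Polynomial.toLaurent_injective (R := ZMod p)
      exact this (by simpa using h0)
    have h3 : (Polynomial.X - Polynomial.C 1 : Polynomial (ZMod p)) ≠ 0 :=
      Polynomial.X_sub_C_ne_zero 1
    rw [Polynomial.C_1] at h3
    exact h3 h2
  · intro hu
    have := hu.map (laurentEvalOne p)
    rw [map_sub, laurentEvalOne_T, _root_.map_one, sub_self] at this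
    exact not_isUnit_zero this

/-- For `g ∈ Mₙ(R)`, `R = 𝔽_p[x,x⁻¹]`, the submodule `g·R^n` is maximal in `R^n`
iff `det g` is nonzero and irreducible in `R`. -/
theorem stmt_5 (p n : ℕ) [Fact p.Prime]
    (g : Matrix (Fin n) (Fin n) (LaurentPolynomial (ZMod p))) :
    IsCoatom (LinearMap.range g.mulVecLin) ↔ (g.det ≠ 0 ∧ Irreducible g.det) := by
  obtain ⟨ha0, hau⟩ := laurent_exists_nonunit p
  rw [aux_coatom_iff ha0 hau]
  exact ⟨fun h => ⟨fun h0 => not_irreducible_zero (h0 ▸ h), h⟩, fun h => h.2⟩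
end

section
/- A subgroup V of L_n = (ℤ/pℤ)^n ≀ ℤ is normal if and only if its associated triple (s, V₀, v) satisfies: x·V₀ = V₀, (1 − x^s)·A_n ⊆ V₀, and (1 − x)·v ∈ V₀, where A_n is the base group, viewed as a module over 𝔽_p[x,x⁻¹]. -/
open Finsupp Multiplicative

/-- The base group of the lamplighter group `L_n = (ℤ/pℤ)^n ≀ ℤ`: `⊕_ℤ (ℤ/pℤ)^n`. -/
abbrev LampBase (p n : ℕ) := ℤ →₀ (Fin n → ZMod p)

/-- The shift `x^s` on the base group. -/
def lampShift (p n : ℕ) (s : ℤ) : LampBase p n ≃+ LampBase p n :=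
  Finsupp.domCongr (Equiv.addRight s)

/-- The shift action of `ℤ` on the (multiplicative) base group. -/
noncomputable def lampAct (p n : ℕ) :
    Multiplicative ℤ →* MulAut (Multiplicative (LampBase p n)) where
  toFun s := AddEquiv.toMultiplicative (lampShift p n s.toAdd)
  map_one' := by
    ext w
    simp [lampShift, Finsupp.domCongr_apply]
    rfl
  map_mul' s t := by
    ext w
    simp [lampShift, Finsupp.domCongr_apply, MulAut.mul_def, MulEquiv.trans_apply]
    try ext i
    all_goals simp [Finsupp.equivMapDomain_apply, Equiv.Perm.mul_def]
    all_goals ring_nf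

/-- The lamplighter group `L_n = (ℤ/pℤ)^n ≀ ℤ`, realized as the semidirect
product of the base group `⊕_ℤ (ℤ/pℤ)^n` with `ℤ` acting by the shift. -/
abbrev Lamp (p n : ℕ) :=
  SemidirectProduct (Multiplicative (LampBase p n)) (Multiplicative ℤ) (lampAct p n)

theorem lampShift_apply (p n : ℕ) (s : ℤ) (w : LampBase p n) (k : ℤ) :
    lampShift p n s w k = w (k - s) := by
  simp [lampShift, Finsupp.domCongr_apply, Finsupp.equivMapDomain_apply, sub_eq_add_neg]

theorem lampShift_add (p n : ℕ) (a b : ℤ) (w : LampBase p n) :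
    lampShift p n (a + b) w = lampShift p n a (lampShift p n b w) := by
  ext k i; simp [lampShift_apply]; ring_nf

theorem lampShift_zero (p n : ℕ) (w : LampBase p n) : lampShift p n 0 w = w := by
  ext k i; simp [lampShift_apply]

theorem mk_mul (p n : ℕ) (a b : LampBase p n) (t u : ℤ) :
    (⟨ofAdd a, ofAdd t⟩ : Lamp p n) * ⟨ofAdd b, ofAdd u⟩ =
      ⟨ofAdd (a + lampShift p n t b), ofAdd (t + u)⟩ := rfl

theorem mk_inv (p n : ℕ) (a : LampBase p n) (t : ℤ) :
    (⟨ofAdd a, ofAdd t⟩ : Lamp p n)⁻¹ = ⟨ofAdd (lampShift p n (-t) (-a)), ofAdd (-t)⟩ := rfl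

theorem inl_eq (p n : ℕ) (w : LampBase p n) :
    SemidirectProduct.inl (ofAdd w) = (⟨ofAdd w, ofAdd 0⟩ : Lamp p n) := rfl

theorem conj_formula (p n : ℕ) (a b : LampBase p n) (t u : ℤ) :
    (⟨ofAdd a, ofAdd t⟩ : Lamp p n) * ⟨ofAdd b, ofAdd u⟩ * (⟨ofAdd a, ofAdd t⟩ : Lamp p n)⁻¹ =
      ⟨ofAdd (a + lampShift p n t b - lampShift p n u a), ofAdd u⟩ := by
  rw [mk_inv, mk_mul, mk_mul]
  simp only [SemidirectProduct.ext_iff, EmbeddingLike.apply_eq_iff_eq]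
  constructor
  · rw [← lampShift_add, show t + u + -t = u by ring, map_neg]
    abel
  · ring

/-- Normality criterion for a subgroup of the lamplighter group in terms of its
triple `(s, V₀, v)`. -/
theorem stmt_8 (p n : ℕ) [Fact p.Prime] (hn : 1 ≤ n)
    (V : Subgroup (Lamp p n)) (s : ℕ) (v : LampBase p n)
    (hs : Subgroup.map SemidirectProduct.rightHom V =
      Subgroup.zpowers (ofAdd (s : ℤ)))
    (hv : (⟨ofAdd v, ofAdd (s : ℤ)⟩ : Lamp p n) ∈ V) :
    V.Normal ↔
      ((∀ w : LampBase p n, SemidirectProduct.inl (ofAdd w) ∈ V ↔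
          SemidirectProduct.inl (ofAdd (lampShift p n 1 w)) ∈ V) ∧
       (∀ w : LampBase p n,
          SemidirectProduct.inl (ofAdd (w - lampShift p n (s : ℤ) w)) ∈ V) ∧
       SemidirectProduct.inl (ofAdd (v - lampShift p n 1 v)) ∈ V) := by
  set wv : Lamp p n := (⟨ofAdd v, ofAdd (s : ℤ)⟩ : Lamp p n) with hwv
  have hmul : ∀ x y : LampBase p n, SemidirectProduct.inl (ofAdd x) ∈ V →
      SemidirectProduct.inl (ofAdd y) ∈ V →
      SemidirectProduct.inl (ofAdd (x + y)) ∈ V := by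
    intro x y hx hy
    have := V.mul_mem hx hy
    rwa [← map_mul, ← ofAdd_add] at this
  have hneg : ∀ x : LampBase p n, SemidirectProduct.inl (ofAdd x) ∈ V →
      SemidirectProduct.inl (ofAdd (-x)) ∈ V := by
    intro x hx
    have := V.inv_mem hx
    rwa [← map_inv, ← ofAdd_neg] at this
  constructor
  · intro hN
    refine ⟨fun w => ⟨fun hw => ?_, fun hw => ?_⟩, fun w => ?_, ?_⟩
    · have t1 := hN.conj_mem _ hw (⟨ofAdd 0, ofAdd 1⟩ : Lamp p n)
      rw [inl_eq, conj_formula] at t1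
      rw [inl_eq]
      simpa [lampShift_zero] using t1
    · have t1 := hN.conj_mem _ hw (⟨ofAdd 0, ofAdd (-1)⟩ : Lamp p n)
      rw [inl_eq, conj_formula] at t1
      rw [inl_eq]
      simpa [lampShift_zero, ← lampShift_add] using t1
    · have t1 := hN.conj_mem _ hv (SemidirectProduct.inl (ofAdd w))
      have t2 := V.mul_mem t1 (V.inv_mem hv)
      rw [inl_eq, conj_formula, hwv, mk_inv, mk_mul] at t2
      have e : SemidirectProduct.inl
          (ofAdd (w - lampShift p n (s : ℤ) w)) =
          (⟨ofAdd (w + lampShift p n 0 v - lampShift p n (s : ℤ) w +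
              lampShift p n (s : ℤ) (lampShift p n (-(s : ℤ)) (-v))),
            ofAdd ((s : ℤ) + -(s : ℤ))⟩ : Lamp p n) := by
        rw [inl_eq]
        simp only [SemidirectProduct.ext_iff, EmbeddingLike.apply_eq_iff_eq]
        constructor
        · rw [← lampShift_add, show (s : ℤ) + -(s : ℤ) = 0 by ring,
            lampShift_zero, lampShift_zero]
          abel
        · ring
      rw [e]; exact t2
    · have t1 := hN.conj_mem _ hv (⟨ofAdd 0, ofAdd 1⟩ : Lamp p n)
      have t2 := V.mul_mem t1 (V.inv_mem hv)
      rw [conj_formula, hwv, mk_inv, mk_mul] at t2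
      have t3 := V.inv_mem t2
      rw [mk_inv] at t3
      have e : SemidirectProduct.inl (ofAdd (v - lampShift p n 1 v)) =
          (⟨ofAdd (lampShift p n (-((s : ℤ) + -(s : ℤ)))
              (-(0 + lampShift p n 1 v - lampShift p n (s : ℤ) 0 +
                lampShift p n (s : ℤ) (lampShift p n (-(s : ℤ)) (-v))))),
            ofAdd (-((s : ℤ) + -(s : ℤ)))⟩ : Lamp p n) := by
        rw [inl_eq]
        simp only [SemidirectProduct.ext_iff, EmbeddingLike.apply_eq_iff_eq]
        constructor
        · rw [← lampShift_add, show (s : ℤ) + -(s : ℤ) = 0 by ring]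
          simp only [neg_zero, lampShift_zero, map_zero, map_neg, zero_add]
          abel
        · ring
      rw [e]; exact t3
  · rintro ⟨h1, h2, h3⟩
    have hA : ∀ (t : ℤ) (w : LampBase p n), SemidirectProduct.inl (ofAdd w) ∈ V →
        SemidirectProduct.inl (ofAdd (lampShift p n t w)) ∈ V := by
      intro t
      induction t using Int.induction_on with
      | zero => intro w hw; rwa [lampShift_zero]
      | succ k ih =>
        intro w hw
        rw [show ((k : ℤ) + 1) = 1 + (k : ℤ) by ring, lampShift_add]
        exact (h1 _).mp (ih w hw)
      | pred k ih =>
        intro w hw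
        refine (h1 _).mpr ?_
        rw [← lampShift_add, show (1 : ℤ) + (-(k : ℤ) - 1) = -(k : ℤ) by ring]
        exact ih w hw
    have hB : ∀ t : ℤ, SemidirectProduct.inl (ofAdd (lampShift p n t v - v)) ∈ V := by
      intro t
      induction t using Int.induction_on with
      | zero =>
        rw [lampShift_zero, sub_self, ofAdd_zero, map_one]
        exact V.one_mem
      | succ k ih =>
        have e : lampShift p n ((k : ℤ) + 1) v - v =
            lampShift p n 1 (lampShift p n (k : ℤ) v - v) + -(v - lampShift p n 1 v) := by
          rw [show ((k : ℤ) + 1) = 1 + (k : ℤ) by ring, lampShift_add, map_sub]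
          abel
        rw [e]
        exact hmul _ _ (hA 1 _ ih) (hneg _ h3)
      | pred k ih =>
        have e : lampShift p n (-(k : ℤ) - 1) v - v =
            lampShift p n (-1) (lampShift p n (-(k : ℤ)) v - v) +
              lampShift p n (-1) (v - lampShift p n 1 v) := by
          rw [map_sub, map_sub, ← lampShift_add, ← lampShift_add,
            show (-1 : ℤ) + -(k : ℤ) = -(k : ℤ) - 1 by ring,
            show (-1 : ℤ) + 1 = 0 by ring, lampShift_zero]
          abel
        rw [e]
        exact hmul _ _ (hA (-1) _ ih) (hA (-1) _ h3)
    refine ⟨fun h hh g => ?_⟩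
    have hrh : SemidirectProduct.rightHom h ∈
        Subgroup.map SemidirectProduct.rightHom V := ⟨h, hh, rfl⟩
    rw [hs] at hrh
    obtain ⟨k, hk⟩ := hrh
    obtain ⟨w, hw⟩ : ∃ w, SemidirectProduct.inl w = h * wv ^ (-k) := by
      have : h * wv ^ (-k) ∈ SemidirectProduct.rightHom.ker := by
        rw [MonoidHom.mem_ker, map_mul, map_zpow, ← hk]
        have : SemidirectProduct.rightHom wv = ofAdd (s : ℤ) := rfl
        rw [this]
        group
      rw [← SemidirectProduct.range_inl_eq_ker_rightHom] at this
      exact this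
    have hbV : SemidirectProduct.inl w ∈ V := by
      rw [hw]
      exact V.mul_mem hh (V.zpow_mem hv (-k))
    have hdec : h = SemidirectProduct.inl w * wv ^ k := by
      rw [hw]; group
    have key : g * h * g⁻¹ =
        (g * SemidirectProduct.inl w * g⁻¹) * (g * wv * g⁻¹) ^ k := by
      rw [hdec, conj_zpow]; group
    rw [key]
    obtain ⟨a, τ⟩ := g
    have hg : (⟨a, τ⟩ : Lamp p n) = ⟨ofAdd a.toAdd, ofAdd τ.toAdd⟩ := rfl
    refine V.mul_mem ?_ (V.zpow_mem ?_ k)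
    · have e : (⟨a, τ⟩ : Lamp p n) * SemidirectProduct.inl w * (⟨a, τ⟩ : Lamp p n)⁻¹ =
          SemidirectProduct.inl (ofAdd (lampShift p n τ.toAdd w.toAdd)) := by
        rw [hg, show SemidirectProduct.inl w =
          SemidirectProduct.inl (ofAdd w.toAdd) from rfl, inl_eq, conj_formula, inl_eq]
        simp [lampShift_zero]
      rw [e]
      exact hA τ.toAdd w.toAdd hbV
    · have e : (⟨a, τ⟩ : Lamp p n) * wv * (⟨a, τ⟩ : Lamp p n)⁻¹ =
          SemidirectProduct.inl
            (ofAdd ((a.toAdd - lampShift p n (s : ℤ) a.toAdd) +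
              (lampShift p n τ.toAdd v - v))) * wv := by
        rw [hg, hwv, conj_formula, inl_eq, mk_mul]
        simp only [SemidirectProduct.ext_iff, EmbeddingLike.apply_eq_iff_eq]
        constructor
        · rw [lampShift_zero]; abel
        · ring
      rw [e]
      exact V.mul_mem (hmul _ _ (h2 a.toAdd) (hB τ.toAdd)) hv
end

section
/- Let M be a module over R = 𝔽_p[x,x⁻¹], let k ≥ 1, and let M_π denote the R-module with the same underlying group as M but with x acting as x^k acts on M. If M_π is isomorphic to R as an R-module, then k = 1. -/
/-- If `M` is an `R`-module (`R = 𝔽_p[x,x⁻¹]`) and the module `M_π`, obtained by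
letting `x` act as `x^k`, is isomorphic to `R` as an `R`-module, then `k = 1`.
The isomorphism `M_π ≅ R` is expressed as an additive isomorphism `e : M ≃+ R`
intertwining the `x^k`-action on `M` with multiplication by `x` on `R` (which,
since any additive map of `𝔽_p`-vector spaces is `𝔽_p`-linear and `R` is
generated by `𝔽_p`, `x` and `x⁻¹`, says exactly that `e` is `R`-linear on `M_π`). -/
theorem stmt_19 (p k : ℕ) [Fact p.Prime] (hk : 1 ≤ k)
    (M : Type) [AddCommGroup M] [Module (LaurentPolynomial (ZMod p)) M]
    (e : M ≃+ LaurentPolynomial (ZMod p))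
    (he : ∀ m : M,
      e ((LaurentPolynomial.T (k : ℤ) : LaurentPolynomial (ZMod p)) • m) =
        LaurentPolynomial.T 1 * e m) :
    k = 1 := by
  haveI : NeZero p := ⟨(Fact.out : p.Prime).ne_zero⟩
  set R := LaurentPolynomial (ZMod p) with hR
  open LaurentPolynomial in
  -- the transported action of `T 1` on `R`
  let F : R →+ R := AddMonoidHom.mk'
    (fun a => e ((LaurentPolynomial.T 1 : R) • e.symm a))
    (fun a b => by simp only [map_add, smul_add])
  have hF : ∀ a : R, F a = e ((LaurentPolynomial.T 1 : R) • e.symm a) := fun _ => rfl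
  have he' : ∀ b : R, e.symm (LaurentPolynomial.T 1 * b)
      = (LaurentPolynomial.T (k : ℤ) : R) • e.symm b := by
    intro b
    apply e.injective
    rw [he, e.apply_symm_apply, e.apply_symm_apply]
  -- F commutes with multiplication by T 1
  have hFT1 : ∀ b : R, F (LaurentPolynomial.T 1 * b) = LaurentPolynomial.T 1 * F b := by
    intro b
    rw [hF, he', smul_smul, mul_comm, ← smul_smul, he, ← hF]
  -- F commutes with multiplication by T n, any n : ℤ
  have hFT : ∀ (n : ℤ) (b : R), F (LaurentPolynomial.T n * b) = LaurentPolynomial.T n * F b := by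
    intro n
    induction n using Int.induction_on with
    | zero => intro b; rw [LaurentPolynomial.T_zero, one_mul, one_mul]
    | succ n ih =>
        intro b
        have : ((n : ℤ) + 1) = 1 + n := by ring
        rw [this, LaurentPolynomial.T_add, mul_assoc, hFT1, ih, mul_assoc]
    | pred n ih =>
        intro b
        have h1 : (LaurentPolynomial.T 1 : R) * LaurentPolynomial.T (-(n : ℤ) - 1) =
            LaurentPolynomial.T (-(n : ℤ)) := by
          rw [← LaurentPolynomial.T_add]; ring_nf
        have hT0 : ∀ c : R, LaurentPolynomial.T (-1) * (LaurentPolynomial.T 1 * c) = c := by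
          intro c; rw [← mul_assoc, ← LaurentPolynomial.T_add]; norm_num
        have h2 : LaurentPolynomial.T 1 * F (LaurentPolynomial.T (-(n:ℤ)-1) * b)
            = LaurentPolynomial.T (-(n:ℤ)) * F b := by
          rw [← hFT1, ← mul_assoc, h1, ih]
        calc F (LaurentPolynomial.T (-(n:ℤ)-1) * b)
            = LaurentPolynomial.T (-1) *
              (LaurentPolynomial.T 1 * F (LaurentPolynomial.T (-(n:ℤ)-1) * b)) := (hT0 _).symm
          _ = LaurentPolynomial.T (-1) * (LaurentPolynomial.T (-(n:ℤ)) * F b) := by rw [h2]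
          _ = LaurentPolynomial.T (-(n:ℤ)-1) * F b := by
              rw [← mul_assoc, ← LaurentPolynomial.T_add]; ring_nf
  -- F commutes with multiplication by constants
  have hFC : ∀ (c : ZMod p) (b : R), F (LaurentPolynomial.C c * b) =
      LaurentPolynomial.C c * F b := by
    intro c b
    obtain ⟨n, rfl⟩ := ZMod.natCast_rightInverse.surjective c
    rw [map_natCast (LaurentPolynomial.C : ZMod p →+* R) n, ← nsmul_eq_mul, map_nsmul,
      nsmul_eq_mul]
  -- F is R-linear
  have hmul : ∀ (r b : R), F (r * b) = r * F b := by
    intro r b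
    induction r using LaurentPolynomial.induction_on' with
    | add f g hf hg => rw [add_mul, map_add, hf, hg, add_mul]
    | C_mul_T n a => rw [mul_assoc, hFC, hFT, mul_assoc]
  set u : R := F 1 with hu
  have hFa : ∀ a : R, F a = a * u := by
    intro a
    rw [← mul_one a, hmul, mul_one, ← hu]
  -- iterates of F
  have hiter : ∀ j : ℕ, F^[j] (1 : R) = e ((LaurentPolynomial.T (j : ℤ) : R) • e.symm 1) := by
    intro j
    induction j with
    | zero => simp [LaurentPolynomial.T_zero]
    | succ j ih =>
        rw [Function.iterate_succ_apply', ih, hF, e.symm_apply_apply, smul_smul,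
          ← LaurentPolynomial.T_add]
        push_cast
        ring_nf
  have hupow : ∀ j : ℕ, F^[j] (1 : R) = u ^ j := by
    intro j
    induction j with
    | zero => simp
    | succ j ih => rw [Function.iterate_succ_apply', ih, hFa, ← pow_succ]
  -- u ^ k = T 1
  have hukey : u ^ k = (LaurentPolynomial.T 1 : R) := by
    rw [← hupow, hiter, he, e.apply_symm_apply, mul_one]
  -- clear denominators
  obtain ⟨n, f, hf⟩ := LaurentPolynomial.exists_T_pow u
  have hfk : Polynomial.toLaurent (f ^ k) = Polynomial.toLaurent (Polynomial.X ^ (1 + k * n)) := by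
    rw [map_pow, hf, mul_pow, hukey, LaurentPolynomial.T_pow, ← LaurentPolynomial.T_add,
      Polynomial.toLaurent_X_pow]
    push_cast
    ring_nf
  have hfk' : f ^ k = Polynomial.X ^ (1 + k * n) := Polynomial.toLaurent_injective hfk
  have hf0 : f ≠ 0 := by
    intro h
    rw [h, zero_pow (by omega : k ≠ 0)] at hfk'
    exact (pow_ne_zero _ Polynomial.X_ne_zero) hfk'.symm
  have hdeg : k * f.natDegree = 1 + k * n := by
    have hlc : f.leadingCoeff ^ k ≠ 0 :=
      pow_ne_zero _ (Polynomial.leadingCoeff_ne_zero.mpr hf0)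
    rw [← Polynomial.natDegree_pow' hlc, hfk', Polynomial.natDegree_X_pow]
  have hdvd : k ∣ 1 := by
    have h2 : k ∣ 1 + k * n := hdeg ▸ Dvd.intro f.natDegree rfl
    rw [add_comm] at h2
    exact (Nat.dvd_add_right (Dvd.intro n rfl)).mp h2
  exact Nat.dvd_one.mp hdvd
end
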